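/- Let S = Y ∩ Z ⊆ ℙ⁴ be a smooth intersection of a smooth hyperquadric Y with a hypercubic Z, and let D ⊆ S be a reduced curve of degree d and arithmetic genus g that is NOT the complete intersection of S with another hypersurface. Then g ≤ B(d) ≤ (d² − 1)/12, where B(d) = (d² − r²)/12 if d ≡ r (mod 6) with r ∈ {−2, −1, 1, 2, 3}, and B(d) = d²/12 − 1 if d ≡ 0 (mod 6). -/
import Mathlib


/-- The bound `B(d)`: `B(d) = (d² − r²)/12` if `d ≡ r (mod 6)` with
`r ∈ {−2, −1, 1, 2, 3}`, and `B(d) = d²/12 − 1` if `6 ∣ d`.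
(All the divisions are exact.) -/
def Bbound (d : ℤ) : ℤ :=
  if d % 6 = 0 then d ^ 2 / 12 - 1
  else if d % 6 = 1 ∨ d % 6 = 5 then (d ^ 2 - 1) / 12
  else if d % 6 = 2 ∨ d % 6 = 4 then (d ^ 2 - 4) / 12
  else (d ^ 2 - 9) / 12

/-- let `S = Y ∩ Z ⊆ ℙ⁴` be a smooth intersection of a smooth
hyperquadric `Y` with a hypercubic `Z` (a smooth sextic K3 surface with
hyperplane class `HS`, `HS² = 6`, and `2 p_a − 2 = D²` since `K_S = 0`), and
let `D ⊆ S` be a reduced curve of degree `d ≥ 1` and arithmetic genus `g`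
which is NOT the complete intersection of `S` with another hypersurface
(i.e. `D ≠ e·HS` in `Pic S` for every `e > 0`).  Then
`g ≤ B(d) ≤ (d² − 1)/12`.
The hypotheses encode: Riemann–Roch effectivity (`H·D' ≥ 0`, `D'² > −4` ⇒
`D'` effective), the Hodge-index fact, and that every effective class of
degree between 1 and 3 on `S ⊆ Y` has genus ≤ 0, i.e. square ≤ −2. -/
theorem genus_bound_on_sextic_K3
    (M : Type*) [AddCommGroup M]
    (B : M →ₗ[ℤ] M →ₗ[ℤ] ℤ) (hsymm : ∀ a b : M, B a b = B b a)
    (HS : M) (hH6 : B HS HS = 6)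
    (Eff : Set M)
    (hRReff : ∀ D' : M, 0 ≤ B HS D' → -4 < B D' D' → D' ∈ Eff)
    (hHodge : ∀ D' : M, B HS D' = 0 → -4 < B D' D' → D' = 0)
    (hlow : ∀ D' ∈ Eff, 1 ≤ B HS D' → B HS D' ≤ 3 → B D' D' ≤ -2)
    (D : M) (hD : D ∈ Eff)
    (g : ℤ) (hg : 2 * g - 2 = B D D)
    (d : ℤ) (hd : d = B HS D) (hd1 : 1 ≤ d)
    (hnotCI : ¬ ∃ e : ℤ, 0 < e ∧ D = e • HS) :
    g ≤ Bbound d ∧ 12 * Bbound d ≤ d ^ 2 - 1 := by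
  have hDH : B D HS = d := by rw [hsymm, ← hd]
  have hBH : ∀ k : ℤ, B HS (D - k • HS) = d - 6 * k := by
    intro k
    simp only [map_sub, map_smul, smul_eq_mul, hH6, ← hd]
    ring
  have hBB : ∀ k : ℤ, B (D - k • HS) (D - k • HS) = B D D - 2 * k * d + 6 * k ^ 2 := by
    intro k
    simp only [map_sub, map_smul, LinearMap.sub_apply, LinearMap.smul_apply,
      smul_eq_mul, hH6, hDH, ← hd]
    ring
  have key : ∀ k : ℤ, (1 ≤ d - 6 * k ∧ d - 6 * k ≤ 3) ∨ (1 ≤ 6 * k - d ∧ 6 * k - d ≤ 3) →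
      B D D ≤ 2 * k * d - 6 * k ^ 2 - 2 := by
    intro k hk
    have hBBk := hBB k
    by_cases h4 : -4 < B (D - k • HS) (D - k • HS)
    · rcases hk with ⟨h1, h2⟩ | ⟨h1, h2⟩
      · have heff := hRReff _ (by rw [hBH k]; omega) h4
        have hle := hlow _ heff (by rw [hBH k]; omega) (by rw [hBH k]; omega)
        linarith
      · have hneg : B (-(D - k • HS)) (-(D - k • HS)) = B (D - k • HS) (D - k • HS) := by
          simp only [map_neg, LinearMap.neg_apply, neg_neg, map_sub, map_smul,
            LinearMap.sub_apply, LinearMap.smul_apply, smul_eq_mul]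
          ring
        have hnegH : B HS (-(D - k • HS)) = 6 * k - d := by
          rw [map_neg, hBH k]; ring
        have heff := hRReff _ (by rw [hnegH]; omega) (by rw [hneg]; exact h4)
        have hle := hlow _ heff (by rw [hnegH]; omega) (by rw [hnegH]; omega)
        rw [hneg] at hle
        linarith
    · push_neg at h4
      linarith
  have hq := Int.mul_ediv_add_emod d 6
  set q := d / 6 with hqdef
  have hr : d % 6 = 0 ∨ d % 6 = 1 ∨ d % 6 = 2 ∨ d % 6 = 3 ∨ d % 6 = 4 ∨ d % 6 = 5 := by
    omega
  rcases hr with h | h | h | h | h | h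
  · -- d = 6q
    have hde : d = 6 * q := by omega
    have hE2 : B (D - q • HS) (D - q • HS) ≤ -4 := by
      by_contra hc
      push_neg at hc
      have h0 := hHodge _ (by rw [hBH q]; omega) hc
      have hDq : D = q • HS := by
        have := sub_eq_zero.mp h0
        exact this
      exact hnotCI ⟨q, by omega, hDq⟩
    have hDD4 : B D D ≤ 2 * q * d - 6 * q ^ 2 - 4 := by
      have := hBB q; linarith
    rw [hde] at hDD4
    have h12 : d ^ 2 = 12 * (3 * q ^ 2) := by rw [hde]; ring
    have hdiv : d ^ 2 / 12 = 3 * q ^ 2 := by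
      rw [h12, Int.mul_ediv_cancel_left _ (by norm_num)]
    unfold Bbound
    rw [if_pos h, hdiv]
    constructor
    · nlinarith [hg, hDD4]
    · nlinarith [h12]
  · have hde : d = 6 * q + 1 := by omega
    have hDD2 := key q (by omega)
    rw [hde] at hDD2
    have h12 : d ^ 2 - 1 = 12 * (3 * q ^ 2 + q) := by rw [hde]; ring
    have hdiv : (d ^ 2 - 1) / 12 = 3 * q ^ 2 + q := by
      rw [h12, Int.mul_ediv_cancel_left _ (by norm_num)]
    unfold Bbound
    rw [if_neg (by omega), if_pos (Or.inl h), hdiv]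
    constructor
    · nlinarith [hg, hDD2]
    · nlinarith [h12]
  · have hde : d = 6 * q + 2 := by omega
    have hDD2 := key q (by omega)
    rw [hde] at hDD2
    have h12 : d ^ 2 - 4 = 12 * (3 * q ^ 2 + 2 * q) := by rw [hde]; ring
    have hdiv : (d ^ 2 - 4) / 12 = 3 * q ^ 2 + 2 * q := by
      rw [h12, Int.mul_ediv_cancel_left _ (by norm_num)]
    unfold Bbound
    rw [if_neg (by omega), if_neg (by omega), if_pos (Or.inl h), hdiv]
    constructor
    · nlinarith [hg, hDD2]
    · nlinarith [h12]
  · have hde : d = 6 * q + 3 := by omega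
    have hDD2 := key q (by omega)
    rw [hde] at hDD2
    have h12 : d ^ 2 - 9 = 12 * (3 * q ^ 2 + 3 * q) := by rw [hde]; ring
    have hdiv : (d ^ 2 - 9) / 12 = 3 * q ^ 2 + 3 * q := by
      rw [h12, Int.mul_ediv_cancel_left _ (by norm_num)]
    unfold Bbound
    rw [if_neg (by omega), if_neg (by omega), if_neg (by omega), hdiv]
    constructor
    · nlinarith [hg, hDD2]
    · nlinarith [h12]
  · have hde : d = 6 * q + 4 := by omega
    have hDD2 := key (q + 1) (by omega)
    rw [hde] at hDD2
    have h12 : d ^ 2 - 4 = 12 * (3 * q ^ 2 + 4 * q + 1) := by rw [hde]; ring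
    have hdiv : (d ^ 2 - 4) / 12 = 3 * q ^ 2 + 4 * q + 1 := by
      rw [h12, Int.mul_ediv_cancel_left _ (by norm_num)]
    unfold Bbound
    rw [if_neg (by omega), if_neg (by omega), if_pos (Or.inr h), hdiv]
    constructor
    · nlinarith [hg, hDD2]
    · nlinarith [h12]
  · have hde : d = 6 * q + 5 := by omega
    have hDD2 := key (q + 1) (by omega)
    rw [hde] at hDD2
    have h12 : d ^ 2 - 1 = 12 * (3 * q ^ 2 + 5 * q + 2) := by rw [hde]; ring
    have hdiv : (d ^ 2 - 1) / 12 = 3 * q ^ 2 + 5 * q + 2 := by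
      rw [h12, Int.mul_ediv_cancel_left _ (by norm_num)]
    unfold Bbound
    rw [if_neg (by omega), if_pos (Or.inr h), hdiv]
    constructor
    · nlinarith [hg, hDD2]
    · nlinarith [h12]
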